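/- Uniqueness of the Grothendieck connection from the formal exponential map (local version): let D = Σₐ dz^a ∂/∂z^a + Σ_{a,b} dz^a C^b_a(z,ε) ∂/∂ε^b be a derivation on C^∞(U) ⊗ Λ(dz) ⊗ ℝ[[ε]] and let e^*(z^a) = z^a + ε^b e₁{}_b^a(z) + (higher order in ε). If D(e^*(z^a)) = 0 for all a and the matrix e₁{}_b^a(z) is invertible for all z, then the coefficients Cₙ of the expansion C = C₋₁ + C₀ ε + ⋯ in powers of ε are uniquely determined recursively by the coefficients eₙ, and conversely the eₙ for n ≥ 2 are uniquely determined recursively by the Cₙ and e₁. In particular, at lowest order C₋₁{}_c^b(z) e₁{}_b^a(z) = −δ^a_c. -/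

import Mathlib

open scoped Manifold

abbrev Ed (d : ℕ) := EuclideanSpace ℝ (Fin d)

/-- The ring `C^∞(ℝᵈ)` of smooth functions. -/
abbrev SmoothFn (d : ℕ) := ContMDiffMap (𝓘(ℝ, Ed d)) (𝓘(ℝ, ℝ)) (Ed d) ℝ (⊤ : ℕ∞)

/-- The algebra `A = C^∞(ℝᵈ) ⊗ Λ(dz¹,…,dzᵈ) ⊗ ℝ[[ε¹,…,εᵈ]]`: an element is a family,
indexed by exterior monomials `dz^S` (`S ⊆ {1,…,d}`, written with increasing indices),
of formal power series in `ε` with smooth coefficients. -/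
abbrev GrAlg (d : ℕ) := Finset (Fin d) → MvPowerSeries (Fin d) (SmoothFn d)

/-- Koszul sign picked up by moving `dzᵃ` from the left across the (increasingly ordered)
monomial `dz^S`, for `a ∉ S`. -/
def ins (d : ℕ) (a : Fin d) (S : Finset (Fin d)) : ℤ :=
  (-1) ^ (S.filter (fun b => b < a)).card

/-- The derivation `∂/∂εᵃ` on formal power series. -/
noncomputable def pe (d : ℕ) (a : Fin d) (g : MvPowerSeries (Fin d) (SmoothFn d)) :
    MvPowerSeries (Fin d) (SmoothFn d) :=
  fun m => (m a + 1) • g (m + Finsupp.single a 1)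

/-- The partial derivative `∂/∂zᵃ` on smooth functions. -/
noncomputable def pd (d : ℕ) (i : Fin d) (f : SmoothFn d) : SmoothFn d :=
  ⟨fun z => fderiv ℝ f z (EuclideanSpace.single i 1), by
    have hf : ContDiff ℝ ((⊤ : ℕ∞) : WithTop ℕ∞) (⇑f) := contMDiff_iff_contDiff.mp f.contMDiff
    have h1 : ContDiff ℝ ((⊤ : ℕ∞) : WithTop ℕ∞) (fderiv ℝ (⇑f)) := by
      apply hf.fderiv_right
      exact_mod_cast le_top
    exact contMDiff_iff_contDiff.mpr (h1.clm_apply contDiff_const)⟩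

/-- `∂/∂zᵃ` applied coefficientwise to a formal power series with smooth coefficients. -/
noncomputable def pz (d : ℕ) (i : Fin d) (g : MvPowerSeries (Fin d) (SmoothFn d)) :
    MvPowerSeries (Fin d) (SmoothFn d) :=
  fun m => pd d i (g m)

/-- The coordinate function `zᵃ` as a smooth function. -/
noncomputable def zfun (d : ℕ) (a : Fin d) : SmoothFn d :=
  ⟨fun z => z a, contMDiff_iff_contDiff.mpr (by exact (EuclideanSpace.proj a : Ed d →L[ℝ] ℝ).contDiff)⟩

/-- The condition `D(e^*(zᵃ)) = 0` for the odd operator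
`D = Σ_b dz^b ∂/∂z^b + Σ_{b,c} dz^b C^c_b(z, ε) ∂/∂ε^c` applied to
`e^*(zᵃ) = E a ∈ C^∞(U)[[ε]]`; since the `dz^b` are independent, it reads
`∂_{z^b}(E a) + Σ_c C^c_b · ∂_{ε^c}(E a) = 0` for all `a, b`. -/
def GrothCond (d : ℕ) (Cm : Fin d → Fin d → MvPowerSeries (Fin d) (SmoothFn d))
    (E : Fin d → MvPowerSeries (Fin d) (SmoothFn d)) : Prop :=
  ∀ a b : Fin d, pz d b (E a) + ∑ c : Fin d, Cm c b * pe d c (E a) = 0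


section Aux

/-- Evaluation at a point as a ring hom on `SmoothFn d`. -/
noncomputable def evalSF (d : ℕ) (z : Ed d) : SmoothFn d →+* ℝ :=
  ContMDiffMap.evalRingHom z

lemma coeff_pe (d : ℕ) (c : Fin d) (m : Fin d →₀ ℕ) (g : MvPowerSeries (Fin d) (SmoothFn d)) :
    MvPowerSeries.coeff m (pe d c g) =
      (m c + 1) • MvPowerSeries.coeff (m + Finsupp.single c 1) g := rfl

lemma coeff_pz (d : ℕ) (i : Fin d) (m : Fin d →₀ ℕ) (g : MvPowerSeries (Fin d) (SmoothFn d)) :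
    MvPowerSeries.coeff m (pz d i g) =
      pd d i (MvPowerSeries.coeff m g) := rfl

lemma constCoeff_pe (d : ℕ) (c : Fin d) (g : MvPowerSeries (Fin d) (SmoothFn d)) :
    MvPowerSeries.constantCoeff (pe d c g) =
      MvPowerSeries.coeff (Finsupp.single c 1) g := by
  show (1 : ℕ) • g (0 + Finsupp.single c 1) = _
  simp [MvPowerSeries.coeff_apply]

lemma constCoeff_pz (d : ℕ) (i : Fin d) (g : MvPowerSeries (Fin d) (SmoothFn d)) :
    MvPowerSeries.constantCoeff (pz d i g) =
      pd d i (MvPowerSeries.constantCoeff g) := rfl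

lemma pd_zfun (d : ℕ) (a b : Fin d) : pd d b (zfun d a) = if a = b then 1 else 0 := by
  have key : ∀ z : Ed d,
      fderiv ℝ (fun z : Ed d => z a) z (EuclideanSpace.single b 1) = if a = b then 1 else 0 := by
    intro z
    have h1 : (fun z : Ed d => z a) = ⇑(EuclideanSpace.proj (𝕜 := ℝ) a) := rfl
    rw [h1, (EuclideanSpace.proj (𝕜 := ℝ) a).fderiv]
    simp [EuclideanSpace.single_apply]
  apply DFunLike.ext
  intro z
  by_cases h : a = b <;> simp [pd, zfun, key z] <;> simp [h]

lemma nsmul_cancel (d n : ℕ) (f : SmoothFn d) (h : (n + 1) • f = 0) : f = 0 := by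
  apply DFunLike.ext
  intro z
  have h2 := congrArg (evalSF d z) h
  rw [map_nsmul, map_zero] at h2
  have h3 : ((n : ℝ) + 1) * (evalSF d z) f = 0 := by
    rw [← h2]; push_cast [nsmul_eq_mul]; ring
  have h4 : ((n : ℝ) + 1) ≠ 0 := by positivity
  have := (mul_eq_zero.mp h3).resolve_left h4
  simpa [evalSF, ContMDiffMap.evalRingHom] using this

lemma vecMul_zero_of_isUnit {n R : Type*} [Fintype n] [DecidableEq n] [CommRing R]
    {M : Matrix n n R} (h : IsUnit M.det) {v : n → R} (hv : Matrix.vecMul v M = 0) : v = 0 := by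
  have h2 := congrArg (fun w => Matrix.vecMul w M⁻¹) hv
  simpa [Matrix.vecMul_vecMul, Matrix.mul_nonsing_inv M h] using h2

/-- Part (1) as a standalone lemma. -/
lemma lowest_order (d : ℕ)
    (E : Fin d → MvPowerSeries (Fin d) (SmoothFn d))
    (Cm : Fin d → Fin d → MvPowerSeries (Fin d) (SmoothFn d))
    (hE0 : ∀ a, MvPowerSeries.constantCoeff (E a) = zfun d a)
    (hC : GrothCond d Cm E) :
    ∀ a b : Fin d,
      ∑ c : Fin d, MvPowerSeries.constantCoeff (Cm c b) *
        MvPowerSeries.coeff (Finsupp.single c 1) (E a) =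
      -(if a = b then 1 else 0) := by
  intro a b
  have h := congrArg (MvPowerSeries.constantCoeff) (hC a b)
  rw [map_add, map_sum, map_zero] at h
  simp only [map_mul, constCoeff_pe] at h
  rw [constCoeff_pz, hE0, pd_zfun] at h
  exact eq_neg_of_add_eq_zero_right h

/-- The coefficient form of the Grothendieck condition. -/
lemma coeff_cond (d : ℕ)
    (E : Fin d → MvPowerSeries (Fin d) (SmoothFn d))
    (Cm : Fin d → Fin d → MvPowerSeries (Fin d) (SmoothFn d))
    (hC : GrothCond d Cm E) (m : Fin d →₀ ℕ) (a b : Fin d) :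
    pd d b (MvPowerSeries.coeff m (E a)) +
      ∑ c : Fin d, ∑ p ∈ Finset.HasAntidiagonal.antidiagonal m,
        MvPowerSeries.coeff p.1 (Cm c b) *
          ((p.2 c + 1) • MvPowerSeries.coeff (p.2 + Finsupp.single c 1) (E a)) = 0 := by
  have h := congrArg (MvPowerSeries.coeff m) (hC a b)
  rw [map_add, map_sum, map_zero] at h
  have e1 : ∀ c : Fin d,
      MvPowerSeries.coeff m (Cm c b * pe d c (E a)) =
        ∑ p ∈ Finset.HasAntidiagonal.antidiagonal m,
          MvPowerSeries.coeff p.1 (Cm c b) *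
            ((p.2 c + 1) • MvPowerSeries.coeff (p.2 + Finsupp.single c 1) (E a)) := by
    intro c
    rw [MvPowerSeries.coeff_mul]
    exact Finset.sum_congr rfl fun p _ => by rw [coeff_pe]
  rw [Finset.sum_congr rfl fun c _ => e1 c, coeff_pz] at h
  exact h

lemma sum_add_finsupp {d : ℕ} (u v : Fin d →₀ ℕ) :
    (∑ i, (u + v) i) = (∑ i, u i) + (∑ i, v i) := by
  simp only [Finsupp.coe_add, Pi.add_apply]
  exact Finset.sum_add_distrib

lemma deg_pos_of_ne_zero {d : ℕ} {m : Fin d →₀ ℕ} (h : m ≠ 0) : 1 ≤ ∑ i, m i := by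
  obtain ⟨c, hc⟩ := Finsupp.ne_iff.mp h
  simp only [Finsupp.coe_zero, Pi.zero_apply] at hc
  calc 1 ≤ m c := Nat.one_le_iff_ne_zero.mpr hc
    _ ≤ ∑ i, m i := Finset.single_le_sum (fun i _ => Nat.zero_le _) (Finset.mem_univ c)

end Aux

/-- Uniqueness of the Grothendieck connection from the formal exponential map (local
version): suppose `e^*(zᵃ) = E a` has constant term (in `ε`) the coordinate function `zᵃ`
and invertible linear coefficient matrix `e₁`, and the connection coefficients `C`
satisfy `D(e^*(zᵃ)) = 0`.  Then:
(1) at lowest order, `C₋₁{}_c^b e₁{}_b^a = −δ^a_c` (with `C₋₁ = C|_{ε=0}`);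
(2) the coefficients of `C` are uniquely determined by `E` (any two solutions agree);
(3) conversely, the higher coefficients `eₙ`, `n ≥ 2`, are uniquely determined by `C`
    together with `e₀ = z` and `e₁` (any two solutions with the same constant and linear
    coefficients agree). -/
theorem grothendieck_connection_unique_from_exponential
    (d : ℕ)
    (E E' : Fin d → MvPowerSeries (Fin d) (SmoothFn d))
    (Cm Cm' : Fin d → Fin d → MvPowerSeries (Fin d) (SmoothFn d))
    (hE0 : ∀ a, MvPowerSeries.constantCoeff (E a) = zfun d a)
    (hE1inv : IsUnit (Matrix.of fun b a =>
      MvPowerSeries.coeff (Finsupp.single b 1) (E a)))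
    (hC : GrothCond d Cm E) :
    (∀ a b : Fin d,
      ∑ c : Fin d, MvPowerSeries.constantCoeff (Cm c b) *
        MvPowerSeries.coeff (Finsupp.single c 1) (E a) =
      -(if a = b then 1 else 0)) ∧
    (GrothCond d Cm' E → Cm = Cm') ∧
    ((∀ a, MvPowerSeries.constantCoeff (E' a) = zfun d a) →
     (∀ a b, MvPowerSeries.coeff (Finsupp.single b 1) (E' a) =
        MvPowerSeries.coeff (Finsupp.single b 1) (E a)) →
     GrothCond d Cm E' → E = E') := by
  classical
  refine ⟨lowest_order d E Cm hE0 hC, ?_, ?_⟩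
  · -- Part (2): uniqueness of Cm
    intro hC'
    have key : ∀ b : Fin d, (fun c => Cm c b - Cm' c b) = 0 := by
      intro b
      set M : Matrix (Fin d) (Fin d) (MvPowerSeries (Fin d) (SmoothFn d)) :=
        Matrix.of fun c a => pe d c (E a) with hMdef
      have hMdet : IsUnit M.det := by
        apply MvPowerSeries.isUnit_iff_constantCoeff.mpr
        have h1 : (MvPowerSeries.constantCoeff) M.det =
            (M.map (MvPowerSeries.constantCoeff)).det :=
          RingHom.map_det _ M
        rw [h1]
        have h2 : M.map (MvPowerSeries.constantCoeff) =
            Matrix.of fun b a =>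
              MvPowerSeries.coeff (Finsupp.single b 1) (E a) := by
          ext c a
          simp [hMdef, Matrix.map_apply, constCoeff_pe]
        rw [h2]
        exact (Matrix.isUnit_iff_isUnit_det _).mp hE1inv
      apply vecMul_zero_of_isUnit hMdet
      funext a
      show ∑ c : Fin d, (Cm c b - Cm' c b) * M c a = 0
      have h3 : ∑ c : Fin d, Cm c b * pe d c (E a) = -(pz d b (E a)) :=
        eq_neg_of_add_eq_zero_right (hC a b)
      have h4 : ∑ c : Fin d, Cm' c b * pe d c (E a) = -(pz d b (E a)) :=
        eq_neg_of_add_eq_zero_right (hC' a b)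
      calc ∑ c : Fin d, (Cm c b - Cm' c b) * M c a
          = ∑ c : Fin d, (Cm c b * pe d c (E a) - Cm' c b * pe d c (E a)) :=
            Finset.sum_congr rfl fun c _ => sub_mul _ _ _
        _ = (∑ c : Fin d, Cm c b * pe d c (E a)) -
              ∑ c : Fin d, Cm' c b * pe d c (E a) := Finset.sum_sub_distrib _ _
        _ = 0 := by rw [h3, h4, sub_self]
    funext c b
    have := congrFun (key b) c
    simpa [sub_eq_zero] using this
  · -- Part (3): uniqueness of E
    intro hE0' hE1' hC'
    set cf := fun (q : Fin d →₀ ℕ) => MvPowerSeries.coeff (R := SmoothFn d) q with hcf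
    set cc := MvPowerSeries.constantCoeff (σ := Fin d) (R := SmoothFn d) with hcc
    -- The matrix B = C₋₁ is invertible
    set A : Matrix (Fin d) (Fin d) (SmoothFn d) :=
      Matrix.of fun b a => MvPowerSeries.coeff (Finsupp.single b 1) (E a) with hAdef
    set B : Matrix (Fin d) (Fin d) (SmoothFn d) := Matrix.of fun c b => cc (Cm c b) with hBdef
    have hBA : B.transpose * A = -1 := by
      ext b a
      rw [Matrix.mul_apply]
      have : ∀ c : Fin d, B.transpose b c * A c a =
          cc (Cm c b) * MvPowerSeries.coeff (Finsupp.single c 1) (E a) := by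
        intro c; simp [hBdef, hAdef, Matrix.transpose_apply]
      rw [Finset.sum_congr rfl fun c _ => this c, lowest_order d E Cm hE0 hC a b]
      simp [Matrix.one_apply, eq_comm]
    have hBdet : IsUnit B.det := by
      have h5 : IsUnit (B.transpose * A).det := by
        rw [hBA]
        apply (Matrix.isUnit_iff_isUnit_det _).mp
        exact isUnit_one.neg
      rw [Matrix.det_mul] at h5
      have h6 := isUnit_of_mul_isUnit_left h5
      rwa [Matrix.det_transpose] at h6
    have key : ∀ n : ℕ, ∀ m : Fin d →₀ ℕ, (∑ i, m i) = n → ∀ a,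
        cf m (E a) = cf m (E' a) := by
      intro n
      induction n using Nat.strong_induction_on with
      | _ n IH =>
        rcases n with _ | _ | n
        · -- degree 0
          intro m hm a
          have hm0 : m = 0 := Finsupp.ext fun i =>
            (Finset.sum_eq_zero_iff.mp hm) i (Finset.mem_univ i)
          subst hm0
          show MvPowerSeries.coeff 0 (E a) = MvPowerSeries.coeff 0 (E' a)
          rw [MvPowerSeries.coeff_zero_eq_constantCoeff_apply,
            MvPowerSeries.coeff_zero_eq_constantCoeff_apply, hE0 a, hE0' a]
        · -- degree 1
          intro m hm a
          have hex : ∃ c, m c ≠ 0 := by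
            by_contra hco
            push_neg at hco
            rw [Finset.sum_eq_zero fun i _ => hco i] at hm
            exact absurd hm (by omega)
          obtain ⟨c, hc⟩ := hex
          have h1 : m c = 1 := by
            have hle : m c ≤ ∑ i, m i :=
              Finset.single_le_sum (fun i _ => Nat.zero_le _) (Finset.mem_univ c)
            omega
          have h2 : ∀ j, j ≠ c → m j = 0 := by
            intro j hj
            have hsum : m c + ∑ i ∈ Finset.univ.erase c, m i = 1 := by
              rw [Finset.add_sum_erase _ _ (Finset.mem_univ c)]; exact hm
            rw [h1] at hsum
            have h0 : ∑ i ∈ Finset.univ.erase c, m i = 0 := by omega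
            exact (Finset.sum_eq_zero_iff.mp h0) j
              (Finset.mem_erase.mpr ⟨hj, Finset.mem_univ j⟩)
          have hm1 : m = Finsupp.single c 1 := Finsupp.ext fun j => by
            rcases eq_or_ne j c with rfl | hj
            · simp [h1]
            · simp [Finsupp.single_apply, Ne.symm hj, h2 j hj]
          rw [hm1]
          exact (hE1' a c).symm
        · -- degree n + 2
          intro m hm a
          have hne : m ≠ 0 := by
            intro h0
            rw [h0] at hm
            simp at hm
          obtain ⟨c₀, hc₀⟩ := Finsupp.ne_iff.mp hne
          have hmc₀ : 1 ≤ m c₀ := Nat.one_le_iff_ne_zero.mpr (by simpa using hc₀)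
          set m' : Fin d →₀ ℕ := m - Finsupp.single c₀ 1 with hm'def
          have hsplit : m' + Finsupp.single c₀ 1 = m := by
            rw [hm'def]
            exact tsub_add_cancel_of_le (Finsupp.single_le_iff.mpr hmc₀)
          have hsing : (∑ i, (Finsupp.single c₀ 1 : Fin d →₀ ℕ) i) = 1 := by
            simp [Finsupp.single_apply]
          have hdeg' : (∑ i, m' i) = n + 1 := by
            have h6 := sum_add_finsupp m' (Finsupp.single c₀ 1)
            rw [hsplit] at h6
            omega
          have hIH2 : ∀ (q : Fin d →₀ ℕ), (∑ i, q i) ≤ n + 1 → ∀ a,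
              cf q (E a) = cf q (E' a) :=
            fun q hq a => IH (∑ i, q i) (by omega) q rfl a
          have hw : (fun c => (m' c + 1) •
              (cf (m' + Finsupp.single c 1) (E a) - cf (m' + Finsupp.single c 1) (E' a))) = 0 := by
            apply vecMul_zero_of_isUnit hBdet
            funext b
            show ∑ c : Fin d, ((m' c + 1) •
              (cf (m' + Finsupp.single c 1) (E a) - cf (m' + Finsupp.single c 1) (E' a))) * B c b = 0
            have h1 := coeff_cond d E Cm hC m' a b
            have h2 := coeff_cond d E' Cm hC' m' a b
            have hpd : MvPowerSeries.coeff m' (E a) =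
                MvPowerSeries.coeff m' (E' a) := IH (n+1) (by omega) m' hdeg' a
            rw [hpd] at h1
            have h3 : (∑ c : Fin d, ∑ p ∈ Finset.HasAntidiagonal.antidiagonal m',
                  MvPowerSeries.coeff p.1 (Cm c b) *
                    ((p.2 c + 1) • MvPowerSeries.coeff
                      (p.2 + Finsupp.single c 1) (E a))) =
                (∑ c : Fin d, ∑ p ∈ Finset.HasAntidiagonal.antidiagonal m',
                  MvPowerSeries.coeff p.1 (Cm c b) *
                    ((p.2 c + 1) • MvPowerSeries.coeff
                      (p.2 + Finsupp.single c 1) (E' a))) :=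
              add_left_cancel (h1.trans h2.symm)
            have h4 : ∀ c : Fin d,
                (∑ p ∈ Finset.HasAntidiagonal.antidiagonal m',
                  MvPowerSeries.coeff p.1 (Cm c b) *
                    ((p.2 c + 1) • MvPowerSeries.coeff
                      (p.2 + Finsupp.single c 1) (E a))) -
                (∑ p ∈ Finset.HasAntidiagonal.antidiagonal m',
                  MvPowerSeries.coeff p.1 (Cm c b) *
                    ((p.2 c + 1) • MvPowerSeries.coeff
                      (p.2 + Finsupp.single c 1) (E' a))) =
                cc (Cm c b) * ((m' c + 1) •
                  (cf (m' + Finsupp.single c 1) (E a) -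
                    cf (m' + Finsupp.single c 1) (E' a))) := by
              intro c
              rw [← Finset.sum_sub_distrib]
              rw [Finset.sum_eq_single ((0 : Fin d →₀ ℕ), m')]
              · rw [← mul_sub, ← smul_sub]
                simp only [zero_add]
                rw [MvPowerSeries.coeff_zero_eq_constantCoeff_apply]
              · intro p hp hne'
                have hp' : p.1 + p.2 = m' := Finset.HasAntidiagonal.mem_antidiagonal.mp hp
                have hp1 : p.1 ≠ 0 := by
                  rintro h0
                  apply hne'
                  rw [h0, zero_add] at hp'
                  exact Prod.ext h0 hp'
                have hd1 : 1 ≤ ∑ i, p.1 i := deg_pos_of_ne_zero hp1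
                have hd2 : (∑ i, p.1 i) + (∑ i, p.2 i) = n + 1 := by
                  have h := sum_add_finsupp p.1 p.2
                  rw [hp'] at h
                  omega
                have hd3 : (∑ i, (p.2 + Finsupp.single c 1 : Fin d →₀ ℕ) i) ≤ n + 1 := by
                  have hs : (∑ i, (Finsupp.single c 1 : Fin d →₀ ℕ) i) = 1 := by
                    simp [Finsupp.single_apply]
                  rw [sum_add_finsupp]
                  omega
                rw [hIH2 _ hd3 a]
                exact sub_self _
              · intro hnotin
                exact absurd (Finset.HasAntidiagonal.mem_antidiagonal.mpr (zero_add m')) hnotin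
            have hsub : ∑ c : Fin d, cc (Cm c b) * ((m' c + 1) •
                (cf (m' + Finsupp.single c 1) (E a) -
                  cf (m' + Finsupp.single c 1) (E' a))) = 0 := by
              calc ∑ c : Fin d, cc (Cm c b) * ((m' c + 1) •
                    (cf (m' + Finsupp.single c 1) (E a) -
                      cf (m' + Finsupp.single c 1) (E' a)))
                  = ∑ c : Fin d,
                      ((∑ p ∈ Finset.HasAntidiagonal.antidiagonal m',
                        MvPowerSeries.coeff p.1 (Cm c b) *
                          ((p.2 c + 1) • MvPowerSeries.coeff
                            (p.2 + Finsupp.single c 1) (E a))) -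
                      (∑ p ∈ Finset.HasAntidiagonal.antidiagonal m',
                        MvPowerSeries.coeff p.1 (Cm c b) *
                          ((p.2 c + 1) • MvPowerSeries.coeff
                            (p.2 + Finsupp.single c 1) (E' a)))) :=
                    Finset.sum_congr rfl fun c _ => (h4 c).symm
                _ = (∑ c : Fin d, ∑ p ∈ Finset.HasAntidiagonal.antidiagonal m',
                        MvPowerSeries.coeff p.1 (Cm c b) *
                          ((p.2 c + 1) • MvPowerSeries.coeff
                            (p.2 + Finsupp.single c 1) (E a))) -
                      (∑ c : Fin d, ∑ p ∈ Finset.HasAntidiagonal.antidiagonal m',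
                        MvPowerSeries.coeff p.1 (Cm c b) *
                          ((p.2 c + 1) • MvPowerSeries.coeff
                            (p.2 + Finsupp.single c 1) (E' a))) := Finset.sum_sub_distrib _ _
                _ = 0 := by rw [h3, sub_self]
            calc ∑ c : Fin d, ((m' c + 1) •
                  (cf (m' + Finsupp.single c 1) (E a) -
                    cf (m' + Finsupp.single c 1) (E' a))) * B c b
                = ∑ c : Fin d, cc (Cm c b) * ((m' c + 1) •
                  (cf (m' + Finsupp.single c 1) (E a) -
                    cf (m' + Finsupp.single c 1) (E' a))) := by
                  refine Finset.sum_congr rfl fun c _ => ?_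
                  rw [hBdef]
                  simp only [Matrix.of_apply]
                  exact mul_comm _ _
              _ = 0 := hsub
          have hGc₀ := congrFun hw c₀
          simp only [Pi.zero_apply] at hGc₀
          have hzero := nsmul_cancel d (m' c₀) _ hGc₀
          rw [hsplit] at hzero
          exact sub_eq_zero.mp hzero
    funext a
    exact MvPowerSeries.ext fun m => key (∑ i, m i) m rfl a
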